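/- Let f(x) = x³ + P·x² + Q·x + R with P, Q, R ∈ ℂ, let Δ = P²Q² - 4Q³ - 4P³R + 18PQR - 27R², and let s ∈ ℂ satisfy s² = Δ and s ≠ 0. Define a = (s - (9R - PQ))/(2s), c = (6Q - 2P²)/(2s), and B = 6a + 2cP - 3, and assume c ≠ 0. Then for every z ∈ ℂ, z is a root of the Ramanujan simple cubic p_B if and only if z = a - c·t for some root t of f. -/

import Mathlib

/-- The Ramanujan simple cubic with parameter `B`, evaluated at `x`. -/
noncomputable def pB (B x : ℂ) : ℂ := x ^ 3 - ((3 + B) / 2) * x ^ 2 - ((3 - B) / 2) * x + 1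

theorem stmt_7 (P Q R Δ s a c B : ℂ)
    (hΔ : Δ = P ^ 2 * Q ^ 2 - 4 * Q ^ 3 - 4 * P ^ 3 * R + 18 * P * Q * R - 27 * R ^ 2)
    (hs : s ^ 2 = Δ) (hs0 : s ≠ 0)
    (ha : a = (s - (9 * R - P * Q)) / (2 * s))
    (hc : c = (6 * Q - 2 * P ^ 2) / (2 * s))
    (hB : B = 6 * a + 2 * c * P - 3)
    (hc0 : c ≠ 0) :
    ∀ z : ℂ, pB B z = 0 ↔
      ∃ t : ℂ, t ^ 3 + P * t ^ 2 + Q * t + R = 0 ∧ z = a - c * t := by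
  subst hΔ
  have h2s : (2 : ℂ) * s ≠ 0 := by simp [hs0]
  have haa : 2 * s * a = s - (9 * R - P * Q) := by
    rw [ha]; field_simp
  have hcc : 2 * s * c = 6 * Q - 2 * P ^ 2 := by
    rw [hc]; field_simp
  have h8 : (8 : ℂ) * s ^ 3 ≠ 0 := by
    simp [hs0, pow_eq_zero_iff]
  have key : ∀ t : ℂ, pB B (a - c * t) =
      -c ^ 3 * (t ^ 3 + P * t ^ 2 + Q * t + R) := by
    intro t
    apply mul_left_cancel₀ h8
    unfold pB
    subst hB
    linear_combination
      ((-8 : ℂ)*s^2 + (8 : ℂ)*s^2*a + (-8 : ℂ)*s^2*a^2 + (-6 : ℂ)*s^2*t*c +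
        (12 : ℂ)*s^2*t*a*c + (-18 : ℂ)*R*s + (36 : ℂ)*R*s*a + (-54 : ℂ)*R*s*t*c +
        (-162 : ℂ)*R^2 + (2 : ℂ)*P*s^2*c + (-4 : ℂ)*P*s^2*a*c + (8 : ℂ)*P*s^2*t*c^2 +
        (18 : ℂ)*P*R*s*c + (2 : ℂ)*P*Q*s + (-4 : ℂ)*P*Q*s*a + (6 : ℂ)*P*Q*s*t*c +
        (36 : ℂ)*P*Q*R + (-2 : ℂ)*P^2*Q*s*c + (-2 : ℂ)*P^2*Q^2) * haa +
      ((9 : ℂ)*s^2*t + (4 : ℂ)*R*s^2*c^2 + (243 : ℂ)*R^2*t + (4 : ℂ)*Q*s^2*t*c^2 +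
        (12 : ℂ)*Q*R*s*c + (12 : ℂ)*Q^2*s*t*c + (36 : ℂ)*Q^2*R + (36 : ℂ)*Q^3*t +
        (1 : ℂ)*P*s^2 + (-36 : ℂ)*P*R*s*t*c + (-81 : ℂ)*P*R^2 + (-162 : ℂ)*P*Q*R*t +
        (-4 : ℂ)*P^2*R*s*c + (-6 : ℂ)*P^2*Q*R + (-9 : ℂ)*P^2*Q^2*t + (36 : ℂ)*P^3*R*t +
        (-1 : ℂ)*P^3*Q^2 + (4 : ℂ)*P^4*R) * hcc +
      ((54 : ℂ)*R + (54 : ℂ)*Q*t + (-18 : ℂ)*P^2*t + (-2 : ℂ)*P^3) * hs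
  intro z
  constructor
  · intro hz
    refine ⟨(a - z) / c, ?_, by field_simp; ring⟩
    have h := key ((a - z) / c)
    have hz' : a - c * ((a - z) / c) = z := by field_simp; ring
    rw [hz', hz] at h
    have hc3 : (-c ^ 3 : ℂ) ≠ 0 := by
      simp [pow_eq_zero_iff, hc0]
    exact (mul_eq_zero.mp h.symm).resolve_left hc3
  · rintro ⟨t, ht, rfl⟩
    rw [key t, ht, mul_zero]
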